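/- arXiv:2204.09615 — 5 statements merged into one kernel-verified Lean document; each statement's English description precedes it below -/
import Mathlib

section
/- Let Z ∈ ℝ^{n×n} be symmetric with 0 ≺ Z ≺ I (so Z and I − Z are both positive definite). Then for all matrices G, G̃, N, Ñ ∈ ℝ^{n×ℓ} and any symmetric T ∈ ℝ^{ℓ×ℓ}: T + Gᵀ N + Nᵀ G ⪯ T + G̃ᵀ N + Nᵀ G̃ + Gᵀ Ñ + Ñᵀ G − G̃ᵀ Ñ − Ñᵀ G̃ + (G − G̃)ᵀ Z⁻¹ (G − G̃) + (N − Ñ)ᵀ (I − Z)⁻¹ (N − Ñ), with equality when G̃ = G and Ñ = N. -/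
open Matrix

/-- psd-overestimate property: for symmetric `Z` with `0 ≺ Z ≺ I`, the bilinear
term `T + Gᵀ N + Nᵀ G` is bounded above (in the Loewner order) by the convex
overestimate, with equality when `G̃ = G` and `Ñ = N`. -/
theorem psd_overestimate
    {n ℓ : ℕ} (Z : Matrix (Fin n) (Fin n) ℝ)
    (hZ : Z.PosDef) (hZ' : ((1 : Matrix (Fin n) (Fin n) ℝ) - Z).PosDef)
    (T : Matrix (Fin ℓ) (Fin ℓ) ℝ) (hT : T.IsSymm)
    (G G' N N' : Matrix (Fin n) (Fin ℓ) ℝ) :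
    ((T + G'ᵀ * N + Nᵀ * G' + Gᵀ * N' + N'ᵀ * G - G'ᵀ * N' - N'ᵀ * G'
        + (G - G')ᵀ * Z⁻¹ * (G - G')
        + (N - N')ᵀ * ((1 : Matrix (Fin n) (Fin n) ℝ) - Z)⁻¹ * (N - N'))
      - (T + Gᵀ * N + Nᵀ * G)).PosSemidef ∧
    (G' = G → N' = N →
      T + G'ᵀ * N + Nᵀ * G' + Gᵀ * N' + N'ᵀ * G - G'ᵀ * N' - N'ᵀ * G'
        + (G - G')ᵀ * Z⁻¹ * (G - G')
        + (N - N')ᵀ * ((1 : Matrix (Fin n) (Fin n) ℝ) - Z)⁻¹ * (N - N')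
      = T + Gᵀ * N + Nᵀ * G) := by
  set W : Matrix (Fin n) (Fin n) ℝ := (1 : Matrix (Fin n) (Fin n) ℝ) - Z with hW
  constructor
  · -- algebraic identity: difference = sum of three psd terms
    set A := G - G' with hA
    set B := N - N' with hB
    clear_value A B W
    have hZu : IsUnit Z.det := isUnit_iff_ne_zero.mpr hZ.det_pos.ne'
    have hWu : IsUnit W.det := isUnit_iff_ne_zero.mpr hZ'.det_pos.ne'
    have hZZ : Z * Z⁻¹ = 1 := mul_nonsing_inv Z hZu
    have hZZ' : Z⁻¹ * Z = 1 := nonsing_inv_mul Z hZu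
    have hWW : W * W⁻¹ = 1 := mul_nonsing_inv W hWu
    have hWW' : W⁻¹ * W = 1 := nonsing_inv_mul W hWu
    have hZt : Zᵀ = Z := by
      have := hZ.isHermitian
      rwa [IsHermitian, conjTranspose_eq_transpose_of_trivial] at this
    have hWt : Wᵀ = W := by
      have := hZ'.isHermitian
      rwa [IsHermitian, conjTranspose_eq_transpose_of_trivial] at this
    have hZit : (Z⁻¹)ᵀ = Z⁻¹ := by rw [transpose_nonsing_inv, hZt]
    have hWit : (W⁻¹)ᵀ = W⁻¹ := by rw [transpose_nonsing_inv, hWt]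
    have hc1 : ∀ X : Matrix (Fin n) (Fin ℓ) ℝ, Z * (Z⁻¹ * X) = X := fun X => by
      rw [← Matrix.mul_assoc, hZZ, Matrix.one_mul]
    have hc2 : ∀ X : Matrix (Fin n) (Fin ℓ) ℝ, Z⁻¹ * (Z * X) = X := fun X => by
      rw [← Matrix.mul_assoc, hZZ', Matrix.one_mul]
    have hc3 : ∀ X : Matrix (Fin n) (Fin ℓ) ℝ, W * (W⁻¹ * X) = X := fun X => by
      rw [← Matrix.mul_assoc, hWW, Matrix.one_mul]
    have hc4 : ∀ X : Matrix (Fin n) (Fin ℓ) ℝ, W⁻¹ * (W * X) = X := fun X => by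
      rw [← Matrix.mul_assoc, hWW', Matrix.one_mul]
    have c1 : Aᵀ * Z⁻¹ * Z = Aᵀ := by rw [Matrix.mul_assoc, hZZ', Matrix.mul_one]
    have c2 : Bᵀ * Z * (Z⁻¹ * A) = Bᵀ * A := by
      rw [Matrix.mul_assoc, ← Matrix.mul_assoc Z, hZZ, Matrix.one_mul]
    have e1 : (Z⁻¹ * A - B)ᵀ * Z * (Z⁻¹ * A - B)
        = Aᵀ * Z⁻¹ * A - Aᵀ * B - Bᵀ * A + Bᵀ * Z * B := by
      simp only [transpose_sub, transpose_mul, hZit, Matrix.sub_mul, Matrix.mul_sub]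
      rw [c1, c2, ← Matrix.mul_assoc Aᵀ Z⁻¹ A]
      abel
    have c3 : Bᵀ * W * W⁻¹ = Bᵀ := by rw [Matrix.mul_assoc, hWW, Matrix.mul_one]
    have c4 : Bᵀ * W⁻¹ * (W * B) = Bᵀ * B := by
      rw [Matrix.mul_assoc, ← Matrix.mul_assoc W⁻¹, hWW', Matrix.one_mul]
    have e2 : ((W - 1) * B)ᵀ * W⁻¹ * ((W - 1) * B)
        = Bᵀ * W * B - Bᵀ * B - Bᵀ * B + Bᵀ * W⁻¹ * B := by
      simp only [transpose_mul, transpose_sub, transpose_one, hWt, hWit,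
        Matrix.sub_mul, Matrix.mul_sub, Matrix.one_mul, Matrix.mul_one, c3, c4]
      rw [← Matrix.mul_assoc Bᵀ W B]
      abel
    have e3 : Bᵀ * W * B = Bᵀ * B - Bᵀ * Z * B := by
      rw [hW, Matrix.mul_sub, Matrix.mul_one, Matrix.sub_mul]
    have e4 : Aᵀ * B = Gᵀ * N - Gᵀ * N' - G'ᵀ * N + G'ᵀ * N' := by
      rw [hA, hB, transpose_sub, Matrix.sub_mul, Matrix.mul_sub, Matrix.mul_sub]
      abel
    have e5 : Bᵀ * A = Nᵀ * G - Nᵀ * G' - N'ᵀ * G + N'ᵀ * G' := by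
      rw [hA, hB, transpose_sub, Matrix.sub_mul, Matrix.mul_sub, Matrix.mul_sub]
      abel
    have key :
        (T + G'ᵀ * N + Nᵀ * G' + Gᵀ * N' + N'ᵀ * G - G'ᵀ * N' - N'ᵀ * G'
          + Aᵀ * Z⁻¹ * A + Bᵀ * W⁻¹ * B) - (T + Gᵀ * N + Nᵀ * G)
        = (Z⁻¹ * A - B)ᵀ * Z * (Z⁻¹ * A - B)
          + ((W - 1) * B)ᵀ * W⁻¹ * ((W - 1) * B) + Bᵀ * B := by
      rw [e1, e2, e3, e4, e5]
      abel
    rw [key]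
    have h1 : ((Z⁻¹ * A - B)ᵀ * Z * (Z⁻¹ * A - B)).PosSemidef := by
      have := hZ.posSemidef.conjTranspose_mul_mul_same (Z⁻¹ * A - B)
      rwa [conjTranspose_eq_transpose_of_trivial] at this
    have h2 : (((W - 1) * B)ᵀ * W⁻¹ * ((W - 1) * B)).PosSemidef := by
      have := (hZ'.inv).posSemidef.conjTranspose_mul_mul_same ((W - 1) * B)
      rwa [conjTranspose_eq_transpose_of_trivial] at this
    have h3 : (Bᵀ * B).PosSemidef := by
      have := posSemidef_conjTranspose_mul_self B
      rwa [conjTranspose_eq_transpose_of_trivial] at this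
    exact (h1.add h2).add h3
  · rintro rfl rfl
    simp only [sub_self, transpose_zero, Matrix.zero_mul, Matrix.mul_zero, add_zero]
    abel
end

section
/- Let f ∈ C¹([-r,0]; ℝ^d) satisfy f'(τ) = Π f(τ) for some Π ∈ ℝ^{d×d}, and let F(τ) = (√F f(τ)) ⊗ I_ν for a fixed symmetric positive definite F ∈ ℝ^{d×d}. Then for any continuous x : [t−r, t] → ℝ^ν that is differentiable, d/dt ∫_{-r}^0 F(τ) x(t+τ) dτ = F(0) x(t) − F(−r) x(t−r) − ((√F Π √F⁻¹) ⊗ I_ν) ∫_{-r}^0 F(τ) x(t+τ) dτ. -/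
open Matrix Kronecker intervalIntegral

open MeasureTheory Metric in
private lemma kf_scalar_deriv (r : ℝ) (hr : 0 < r) (g g' : ℝ → ℝ)
    (hg : ∀ τ ∈ Set.Icc (-r) (0:ℝ), HasDerivAt g (g' τ) τ)
    (hg'c : Continuous g') (y : ℝ → ℝ) (hyc : Continuous y) (t : ℝ) :
    HasDerivAt (fun s => ∫ τ in (-r)..0, g τ * y (s + τ))
      (g 0 * y t - g (-r) * y (t - r) - ∫ τ in (-r)..0, g' τ * y (t + τ)) t := by
  have hle : (-r : ℝ) ≤ 0 := by linarith
  set Y : ℝ → ℝ := fun s => ∫ u in (0:ℝ)..s, y u with hYdef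
  have hY : ∀ s, HasDerivAt Y (y s) s := fun s =>
    intervalIntegral.integral_hasDerivAt_right (hyc.intervalIntegrable _ _)
      (hyc.stronglyMeasurableAtFilter _ _) hyc.continuousAt
  have hYc : Continuous Y := by
    have : Differentiable ℝ Y := fun s => (hY s).differentiableAt
    exact this.continuous
  -- integration by parts identity
  have key : ∀ s : ℝ, (∫ τ in (-r)..0, g τ * y (s + τ)) =
      g 0 * Y s - g (-r) * Y (s - r) - ∫ τ in (-r)..0, g' τ * Y (s + τ) := by
    intro s
    have h1 : ∀ τ ∈ Set.uIcc (-r) (0:ℝ), HasDerivAt g (g' τ) τ := by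
      rwa [Set.uIcc_of_le hle]
    have h2 : ∀ τ ∈ Set.uIcc (-r) (0:ℝ),
        HasDerivAt (fun τ => Y (s + τ)) (y (s + τ)) τ := by
      intro τ _
      have := (hY (s + τ)).comp τ ((hasDerivAt_id τ).const_add s)
      simpa [Function.comp_def] using this
    have h3 : IntervalIntegrable g' volume (-r) 0 := hg'c.intervalIntegrable _ _
    have h4 : IntervalIntegrable (fun τ => y (s + τ)) volume (-r) 0 :=
      (hyc.comp (continuous_const.add continuous_id)).intervalIntegrable _ _
    have := intervalIntegral.integral_mul_deriv_eq_deriv_mul h1 h2 h3 h4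
    simpa [add_zero, ← sub_eq_add_neg] using this
  -- derivative of the third term
  have hK : HasDerivAt (fun s => ∫ τ in (-r)..0, g' τ * Y (s + τ))
      (∫ τ in (-r)..0, g' τ * y (t + τ)) t := by
    obtain ⟨C, hC⟩ := (isCompact_Icc (a := t - 1 - r) (b := t + 1)).exists_bound_of_continuousOn
      hyc.continuousOn
    have hmem : ∀ τ ∈ Set.uIoc (-r) (0:ℝ), ∀ s ∈ ball t 1,
        t - 1 - r ≤ s + τ ∧ s + τ ≤ t + 1 := by
      intro τ hτ s hs
      rw [Set.uIoc_of_le hle] at hτ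
      rw [mem_ball, Real.dist_eq, abs_lt] at hs
      constructor <;> nlinarith [hτ.1, hτ.2, hs.1, hs.2]
    have := (intervalIntegral.hasDerivAt_integral_of_dominated_loc_of_deriv_le
      (F := fun s τ => g' τ * Y (s + τ)) (F' := fun s τ => g' τ * y (s + τ))
      (bound := fun τ => |g' τ| * C) (a := -r) (b := 0) (μ := volume) (ball_mem_nhds t one_pos)
      (Filter.Eventually.of_forall fun s =>
        (hg'c.mul (hYc.comp (continuous_const.add continuous_id))).aestronglyMeasurable)
      ((hg'c.mul (hYc.comp (continuous_const.add continuous_id))).intervalIntegrable _ _)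
      (hg'c.mul (hyc.comp (continuous_const.add continuous_id))).aestronglyMeasurable
      (Filter.Eventually.of_forall fun τ hτ s hs => by
        have h := hmem τ hτ s hs
        have hyb : |y (s + τ)| ≤ C := by
          have := hC (s + τ) ⟨h.1, h.2⟩
          simpa [Real.norm_eq_abs] using this
        calc ‖g' τ * y (s + τ)‖ = |g' τ| * |y (s + τ)| := by
              simp [Real.norm_eq_abs, abs_mul]
          _ ≤ |g' τ| * C := mul_le_mul_of_nonneg_left hyb (abs_nonneg _))
      ((hg'c.abs.mul continuous_const).intervalIntegrable _ _)
      (Filter.Eventually.of_forall fun τ _ s _ => by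
        have := ((hY (s + τ)).comp s ((hasDerivAt_id s).add_const τ)).const_mul (g' τ)
        simpa using this)).2
    exact this
  have h0 : HasDerivAt (fun s => g 0 * Y s) (g 0 * y t) t := (hY t).const_mul _
  have h1 : HasDerivAt (fun s => g (-r) * Y (s - r)) (g (-r) * y (t - r)) t := by
    have := ((hY (t - r)).comp t ((hasDerivAt_id t).sub_const r)).const_mul (g (-r))
    simpa using this
  exact ((h0.sub h1).sub hK).congr_of_eventuallyEq
    (Filter.Eventually.of_forall fun s => key s)

/-- Differentiation identity for the distributed-delay term of the Krasovskii
functional: if `f' = Πf` on `[-r,0]` and `F(τ) = (√F f(τ)) ⊗ I_ν`, then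
`d/dt ∫_{-r}^0 F(τ)x(t+τ)dτ
  = F(0)x(t) − F(−r)x(t−r) − ((√FΠ√F⁻¹) ⊗ I_ν) ∫_{-r}^0 F(τ)x(t+τ)dτ`. -/
theorem kf_distributed_term_deriv
    {d ν : ℕ} (r : ℝ) (hr : 0 < r)
    (Pi F sqrtF : Matrix (Fin d) (Fin d) ℝ)
    (hF : F.PosDef) (hsqrt : sqrtF.PosDef) (hsq : sqrtF * sqrtF = F)
    (f : ℝ → Fin d → ℝ) (hf : ContDiff ℝ 1 f)
    (hode : ∀ τ ∈ Set.Icc (-r) (0 : ℝ), HasDerivAt f (Pi.mulVec (f τ)) τ)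
    (Fm : ℝ → Matrix (Fin d × Fin ν) (Fin ν) ℝ)
    (hFm : ∀ τ, Fm τ = fun p j =>
      (sqrtF.mulVec (f τ)) p.1 * (1 : Matrix (Fin ν) (Fin ν) ℝ) p.2 j)
    (x : ℝ → Fin ν → ℝ) (hxc : Continuous x) (hx : Differentiable ℝ x)
    (t : ℝ) :
    HasDerivAt (fun s : ℝ => ∫ τ in (-r)..0, (Fm τ).mulVec (x (s + τ)))
      ((Fm 0).mulVec (x t) - (Fm (-r)).mulVec (x (t - r))
        - ((sqrtF * Pi * sqrtF⁻¹) ⊗ₖ (1 : Matrix (Fin ν) (Fin ν) ℝ)).mulVec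
            (∫ τ in (-r)..0, (Fm τ).mulVec (x (t + τ)))) t := by
  have hfc : Continuous f := hf.continuous
  -- componentwise description of the integrand
  have hcomp : ∀ τ (v : Fin ν → ℝ) (q : Fin d × Fin ν),
      ((Fm τ).mulVec v) q = (sqrtF.mulVec (f τ)) q.1 * v q.2 := by
    intro τ v q
    simp [hFm, Matrix.mulVec, dotProduct, Matrix.one_apply, mul_ite, ite_mul,
      mul_assoc, Finset.mul_sum, Finset.sum_ite_eq]
  -- continuity helpers
  have hmvc : ∀ (M : Matrix (Fin d) (Fin d) ℝ) (q : Fin d),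
      Continuous fun τ => M.mulVec (f τ) q := by
    intro M q
    simp only [Matrix.mulVec, dotProduct]
    exact continuous_finset_sum _ fun j _ => continuous_const.mul ((continuous_apply j).comp hfc)
  have hφc : ∀ s : ℝ, Continuous fun τ => (Fm τ).mulVec (x (s + τ)) := by
    intro s
    apply continuous_pi
    intro q
    simp only [hcomp]
    exact (hmvc sqrtF q.1).mul (((continuous_apply q.2).comp hxc).comp
      (continuous_const.add continuous_id))
  -- component of the integral
  have hint : ∀ (s : ℝ) (q : Fin d × Fin ν),
      (∫ τ in (-r)..0, (Fm τ).mulVec (x (s + τ))) q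
        = ∫ τ in (-r)..0, (sqrtF.mulVec (f τ)) q.1 * x (s + τ) q.2 := by
    intro s q
    have hii : IntervalIntegrable (fun τ => (Fm τ).mulVec (x (s + τ)))
        MeasureTheory.volume (-r) 0 := (hφc s).intervalIntegrable (-r) 0
    have := ((ContinuousLinearMap.proj (R := ℝ) (φ := fun _ : Fin d × Fin ν => ℝ)
      q).intervalIntegral_comp_comm hii).symm
    simp only [ContinuousLinearMap.proj_apply] at this
    rw [this]
    simp_rw [hcomp]
  rw [hasDerivAt_pi]
  rintro ⟨p₁, p₂⟩
  set g : ℝ → ℝ := fun τ => sqrtF.mulVec (f τ) p₁ with hgdef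
  set g' : ℝ → ℝ := fun τ => (sqrtF * Pi).mulVec (f τ) p₁ with hg'def
  set y : ℝ → ℝ := fun u => x u p₂ with hydef
  have hyc : Continuous y := (continuous_apply p₂).comp hxc
  have hg : ∀ τ ∈ Set.Icc (-r) (0:ℝ), HasDerivAt g (g' τ) τ := by
    intro τ hτ
    have hfd : ∀ j, HasDerivAt (fun τ => f τ j) (Pi.mulVec (f τ) j) τ :=
      hasDerivAt_pi.mp (hode τ hτ)
    have h1 : HasDerivAt (fun τ => ∑ j, sqrtF p₁ j * f τ j)
        (∑ j, sqrtF p₁ j * Pi.mulVec (f τ) j) τ :=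
      HasDerivAt.fun_sum fun j _ => (hfd j).const_mul _
    have h2 : g = fun τ => ∑ j, sqrtF p₁ j * f τ j := by
      funext σ
      show (sqrtF.mulVec (f σ)) p₁ = _
      simp [Matrix.mulVec, dotProduct]
    have h3 : g' τ = ∑ j, sqrtF p₁ j * Pi.mulVec (f τ) j := by
      show ((sqrtF * Pi).mulVec (f τ)) p₁ = _
      rw [← Matrix.mulVec_mulVec]
      simp [Matrix.mulVec, dotProduct]
    rw [h2, h3]
    exact h1
  have hscalar := kf_scalar_deriv r hr g g' hg (hmvc (sqrtF * Pi) p₁) y hyc t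
  -- rewrite the function
  have hfun : (fun s : ℝ => (∫ τ in (-r)..0, (Fm τ).mulVec (x (s + τ))) (p₁, p₂))
      = fun s => ∫ τ in (-r)..0, g τ * y (s + τ) := by
    funext s
    exact hint s (p₁, p₂)
  -- rewrite the value
  have hval : ((Fm 0).mulVec (x t) - (Fm (-r)).mulVec (x (t - r))
        - ((sqrtF * Pi * sqrtF⁻¹) ⊗ₖ (1 : Matrix (Fin ν) (Fin ν) ℝ)).mulVec
            (∫ τ in (-r)..0, (Fm τ).mulVec (x (t + τ)))) (p₁, p₂)
      = g 0 * y t - g (-r) * y (t - r) - ∫ τ in (-r)..0, g' τ * y (t + τ) := by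
    have hK : (((sqrtF * Pi * sqrtF⁻¹) ⊗ₖ (1 : Matrix (Fin ν) (Fin ν) ℝ)).mulVec
        (∫ τ in (-r)..0, (Fm τ).mulVec (x (t + τ)))) (p₁, p₂)
        = ∫ τ in (-r)..0, g' τ * y (t + τ) := by
      have hMs : (sqrtF * Pi * sqrtF⁻¹) * sqrtF = sqrtF * Pi := by
        rw [mul_assoc, Matrix.nonsing_inv_mul sqrtF
          (isUnit_iff_ne_zero.mpr hsqrt.det_pos.ne'), mul_one]
      calc (((sqrtF * Pi * sqrtF⁻¹) ⊗ₖ (1 : Matrix (Fin ν) (Fin ν) ℝ)).mulVec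
            (∫ τ in (-r)..0, (Fm τ).mulVec (x (t + τ)))) (p₁, p₂)
          = ∑ q₁ : Fin d, (sqrtF * Pi * sqrtF⁻¹) p₁ q₁
              * (∫ τ in (-r)..0, (Fm τ).mulVec (x (t + τ))) (q₁, p₂) := by
            simp [Matrix.mulVec, dotProduct, Fintype.sum_prod_type,
              Matrix.kroneckerMap_apply, Matrix.one_apply, mul_ite, ite_mul,
              Finset.sum_ite_eq]
        _ = ∑ q₁ : Fin d, ∫ τ in (-r)..0,
              (sqrtF * Pi * sqrtF⁻¹) p₁ q₁ * ((sqrtF.mulVec (f τ)) q₁ * y (t + τ)) := by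
            refine Finset.sum_congr rfl fun q₁ _ => ?_
            rw [hint t (q₁, p₂), ← intervalIntegral.integral_const_mul]
        _ = ∫ τ in (-r)..0, ∑ q₁ : Fin d,
              (sqrtF * Pi * sqrtF⁻¹) p₁ q₁ * ((sqrtF.mulVec (f τ)) q₁ * y (t + τ)) := by
            rw [← intervalIntegral.integral_finset_sum]
            intro q₁ _
            exact (continuous_const.mul ((hmvc sqrtF q₁).mul
              (hyc.comp (continuous_const.add continuous_id)))).intervalIntegrable _ _
        _ = ∫ τ in (-r)..0, g' τ * y (t + τ) := by
            refine intervalIntegral.integral_congr fun τ _ => ?_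
            have : ∑ q₁ : Fin d, (sqrtF * Pi * sqrtF⁻¹) p₁ q₁
                * ((sqrtF.mulVec (f τ)) q₁ * y (t + τ))
                = ((sqrtF * Pi * sqrtF⁻¹).mulVec (sqrtF.mulVec (f τ))) p₁ * y (t + τ) := by
              simp [Matrix.mulVec, dotProduct, Finset.sum_mul, mul_assoc]
            rw [this, Matrix.mulVec_mulVec, hMs]
    rw [_root_.Pi.sub_apply, _root_.Pi.sub_apply, hK, hcomp 0 (x t) (p₁, p₂), hcomp (-r) (x (t - r)) (p₁, p₂)]
  rw [hval]
  exact hscalar.congr_of_eventuallyEq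
    (Filter.Eventually.of_forall fun s => hint s (p₁, p₂))
end

section
/- Let A ∈ ℝ^{n×n}, B ∈ ℝ^{n×p}, K ∈ ℝ^{p×n}, X ∈ ℝ^{p×p}, and r > 0. The characteristic function of the closed-loop system ẋ(t) = Ax(t) + Bu(t−r), u̇(t) = (KB + X)u(t) + (KA − XK)(e^{Ar}x(t) + ∫_{-r}^0 e^{-Aτ}Bu(t+τ)dτ) factors as det(sI_n − A − BK)·det(sI_p − X); hence if A + BK and X are both Hurwitz, every characteristic root has negative real part. -/
open Matrix intervalIntegral

section aux

lemma entry_hasDerivAt {n p : ℕ} (A : Matrix (Fin n) (Fin n) ℝ)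
    (B : Matrix (Fin n) (Fin p) ℝ) (i : Fin n) (j : Fin p) (t : ℝ) :
    HasDerivAt (fun τ : ℝ => (NormedSpace.exp (τ • A) * B) i j)
      ((NormedSpace.exp (t • A) * A * B) i j) t := by
  letI : SeminormedRing (Matrix (Fin n) (Fin n) ℝ) := Matrix.linftyOpSemiNormedRing
  letI : NormedRing (Matrix (Fin n) (Fin n) ℝ) := Matrix.linftyOpNormedRing
  letI : NormedAlgebra ℝ (Matrix (Fin n) (Fin n) ℝ) := Matrix.linftyOpNormedAlgebra
  have h := hasDerivAt_exp_smul_const (𝕂 := ℝ) A t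
  let L0 : Matrix (Fin n) (Fin n) ℝ →ₗ[ℝ] ℝ :=
    { toFun := fun M => (M * B) i j
      map_add' := fun M N => by simp [Matrix.add_mul]
      map_smul' := fun c M => by simp [Matrix.smul_mul] }
  let L : Matrix (Fin n) (Fin n) ℝ →L[ℝ] ℝ := LinearMap.toContinuousLinearMap L0
  have := L.hasFDerivAt.comp_hasDerivAt t h
  exact this

lemma entry_continuous {n p : ℕ} (A : Matrix (Fin n) (Fin n) ℝ)
    (B : Matrix (Fin n) (Fin p) ℝ) (i : Fin n) (j : Fin p) :
    Continuous fun τ : ℝ => (NormedSpace.exp (τ • A) * B) i j :=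
  continuous_iff_continuousAt.mpr fun t => (entry_hasDerivAt A B i j t).continuousAt

lemma key_entry {n p : ℕ} (A : Matrix (Fin n) (Fin n) ℝ)
    (B : Matrix (Fin n) (Fin p) ℝ) (r : ℝ) (s : ℂ) (i : Fin n) (j : Fin p) :
    s * (∫ τ in (-r)..0, Complex.exp (s * τ) * ((NormedSpace.exp ((-τ) • A) * B) i j : ℂ))
      - ∑ k, (A i k : ℂ) *
          ∫ τ in (-r)..0, Complex.exp (s * τ) * ((NormedSpace.exp ((-τ) • A) * B) k j : ℂ)
      = (B i j : ℂ) - Complex.exp (-(s * r)) * ((NormedSpace.exp (r • A) * B) i j : ℂ) := by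
  have hsm : ∀ τ : ℝ, (-τ) • A = τ • (-A) := fun τ => by rw [neg_smul, smul_neg]
  simp_rw [hsm]
  set E : ℝ → Matrix (Fin n) (Fin n) ℝ := fun τ => NormedSpace.exp (τ • (-A)) with hE
  have contf : ∀ (k : Fin n) (l : Fin p),
      Continuous fun τ : ℝ => Complex.exp (s * τ) * ((E τ * B) k l : ℂ) := fun k l =>
    (Complex.continuous_exp.comp (continuous_const.mul Complex.continuous_ofReal)).mul
      (Complex.continuous_ofReal.comp (entry_continuous (-A) B k l))
  -- the derivative of the integrand
  have hderiv : ∀ t : ℝ,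
      HasDerivAt (fun τ : ℝ => Complex.exp (s * τ) * ((E τ * B) i j : ℂ))
        (Complex.exp (s * t) * s * ((E t * B) i j : ℂ)
          + Complex.exp (s * t) * ((E t * (-A) * B) i j : ℂ)) t := by
    intro t
    have h1 : HasDerivAt (fun τ : ℝ => Complex.exp (s * τ)) (Complex.exp (s * t) * s) t := by
      have h0 : HasDerivAt (fun w : ℂ => Complex.exp (s * w)) (Complex.exp (s * t) * s) (t : ℂ) := by
        simpa using ((hasDerivAt_id (t : ℂ)).const_mul s).cexp
      exact h0.comp_ofReal
    have h2 := (entry_hasDerivAt (-A) B i j t).ofReal_comp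
    exact h1.mul h2
  -- continuity of the derivative
  have contd : Continuous fun t : ℝ =>
      Complex.exp (s * t) * s * ((E t * B) i j : ℂ)
        + Complex.exp (s * t) * ((E t * (-A) * B) i j : ℂ) := by
    have c2 : Continuous fun t : ℝ => ((E t * (-A) * B) i j : ℂ) := by
      have : ∀ t : ℝ, E t * (-A) * B = E t * ((-A) * B) := fun t => Matrix.mul_assoc _ _ _
      simp_rw [this]
      exact Complex.continuous_ofReal.comp (entry_continuous (-A) ((-A) * B) i j)
    exact (((Complex.continuous_exp.comp
        (continuous_const.mul Complex.continuous_ofReal)).mul continuous_const).mul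
        (Complex.continuous_ofReal.comp (entry_continuous (-A) B i j))).add
      ((Complex.continuous_exp.comp (continuous_const.mul Complex.continuous_ofReal)).mul c2)
  have hFTC := intervalIntegral.integral_eq_sub_of_hasDerivAt
    (a := -r) (b := 0) (f := fun τ : ℝ => Complex.exp (s * τ) * ((E τ * B) i j : ℂ))
    (fun t _ => hderiv t) (contd.intervalIntegrable _ _)
  -- rearrange the left-hand side into a single integral
  rw [← intervalIntegral.integral_const_mul]
  have : ∀ k : Fin n, (A i k : ℂ) *
      ∫ τ in (-r)..0, Complex.exp (s * τ) * ((E τ * B) k j : ℂ)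
      = ∫ τ in (-r)..0, (A i k : ℂ) * (Complex.exp (s * τ) * ((E τ * B) k j : ℂ)) := fun k =>
    (intervalIntegral.integral_const_mul _ _).symm
  rw [Finset.sum_congr rfl (fun k _ => this k)]
  rw [← intervalIntegral.integral_finset_sum
    (f := fun k (τ : ℝ) => (A i k : ℂ) * (Complex.exp (s * τ) * ((E τ * B) k j : ℂ))) (fun k _ =>
    (continuous_const.mul (contf k j)).intervalIntegrable _ _)]
  rw [← intervalIntegral.integral_sub
    (f := fun τ : ℝ => s * (Complex.exp (s * τ) * ((NormedSpace.exp (τ • (-A)) * B) i j : ℂ)))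
    (g := fun τ : ℝ => ∑ k, (A i k : ℂ) * (Complex.exp (s * τ) * ((E τ * B) k j : ℂ)))
    ((continuous_const.mul (contf i j)).intervalIntegrable _ _)
    ((continuous_finset_sum _ (fun k _ => continuous_const.mul (contf k j))).intervalIntegrable _ _)]
  -- pointwise identification with the derivative
  have hpt : ∀ τ : ℝ,
      s * (Complex.exp (s * τ) * ((E τ * B) i j : ℂ))
        - ∑ k, (A i k : ℂ) * (Complex.exp (s * τ) * ((E τ * B) k j : ℂ))
      = Complex.exp (s * τ) * s * ((E τ * B) i j : ℂ)
        + Complex.exp (s * τ) * ((E τ * (-A) * B) i j : ℂ) := by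
    intro τ
    have hAE : A * E τ = E τ * A :=
      ((((Commute.refl A).neg_right).smul_right τ).exp_right)
    have hmat : E τ * (-A) * B = -(A * (E τ * B)) := by
      rw [Matrix.mul_neg, Matrix.neg_mul, ← hAE, Matrix.mul_assoc]
    have hent : ((E τ * (-A) * B) i j : ℝ) = -∑ k, A i k * (E τ * B) k j := by
      rw [hmat]; simp [Matrix.mul_apply]
    rw [hent]
    push_cast
    rw [mul_neg, Finset.mul_sum]
    rw [sub_eq_add_neg, ← Finset.sum_neg_distrib]
    have : ∀ k : Fin n, -((A i k : ℂ) * (Complex.exp (s * τ) * ((E τ * B) k j : ℂ)))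
        = -(Complex.exp (s * τ) * ((A i k : ℂ) * ((E τ * B) k j : ℂ))) := fun k => by ring
    simp_rw [this]
    ring_nf
    rw [Finset.sum_neg_distrib, ← sub_eq_add_neg]
  rw [intervalIntegral.integral_congr (g := fun τ : ℝ =>
      Complex.exp (s * τ) * s * ((E τ * B) i j : ℂ)
        + Complex.exp (s * τ) * ((E τ * (-A) * B) i j : ℂ)) (fun τ _ => hpt τ)]
  rw [hFTC]
  -- evaluate endpoints
  have hE0 : E 0 = 1 := by simp [hE, NormedSpace.exp_zero]
  have hEr : E (-r) = NormedSpace.exp (r • A) := by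
    simp [hE, neg_smul, smul_neg, neg_neg]
  simp only [hE0, hEr, Matrix.one_mul, Complex.ofReal_zero, mul_zero, Complex.exp_zero,
    one_mul, Complex.ofReal_neg, mul_neg]

end aux

section matrixkey

lemma mapC_mul {a b c : ℕ} (M : Matrix (Fin a) (Fin b) ℝ) (N : Matrix (Fin b) (Fin c) ℝ) :
    (M * N).map Complex.ofReal = M.map Complex.ofReal * N.map Complex.ofReal :=
  Matrix.map_mul (f := Complex.ofRealHom)

lemma mapC_add {a b : ℕ} (M N : Matrix (Fin a) (Fin b) ℝ) :
    (M + N).map Complex.ofReal = M.map Complex.ofReal + N.map Complex.ofReal :=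
  Matrix.map_add _ (by simp) M N

lemma mapC_sub {a b : ℕ} (M N : Matrix (Fin a) (Fin b) ℝ) :
    (M - N).map Complex.ofReal = M.map Complex.ofReal - N.map Complex.ofReal :=
  Matrix.map_sub _ (by simp) M N

lemma mapC_one {a : ℕ} : (1 : Matrix (Fin a) (Fin a) ℝ).map Complex.ofReal = 1 :=
  Matrix.map_one _ Complex.ofReal_zero Complex.ofReal_one

lemma key_matrix {n p : ℕ} (A : Matrix (Fin n) (Fin n) ℝ)
    (B : Matrix (Fin n) (Fin p) ℝ) (r : ℝ) (s : ℂ) :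
    (s • (1 : Matrix (Fin n) (Fin n) ℂ) - A.map Complex.ofReal) *
      (Matrix.of fun i j => ∫ τ in (-r)..0,
        Complex.exp (s * τ) * ((NormedSpace.exp ((-τ) • A) * B) i j : ℂ))
      = B.map Complex.ofReal -
        Complex.exp (-(s * r)) • ((NormedSpace.exp (r • A) * B).map Complex.ofReal) := by
  ext i j
  have h := key_entry A B r s i j
  simp only [Matrix.mul_apply, Matrix.sub_apply, Matrix.smul_apply, Matrix.map_apply,
    Matrix.of_apply, Matrix.one_apply, smul_eq_mul, sub_mul, ite_mul, mul_ite, one_mul,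
    zero_mul, mul_zero, mul_one, Finset.sum_sub_distrib, Finset.sum_ite_eq, Finset.mem_univ,
    if_true] at h ⊢
  exact h

lemma exp_commute_map {n : ℕ} (A : Matrix (Fin n) (Fin n) ℝ) (r : ℝ) :
    A.map Complex.ofReal * (NormedSpace.exp (r • A)).map Complex.ofReal
      = (NormedSpace.exp (r • A)).map Complex.ofReal * A.map Complex.ofReal := by
  have h : A * NormedSpace.exp (r • A) = NormedSpace.exp (r • A) * A :=
    (((Commute.refl A).smul_right r).exp_right)
  rw [← mapC_mul, ← mapC_mul, h]

lemma expMap_det_ne_zero {n : ℕ} (A : Matrix (Fin n) (Fin n) ℝ) (r : ℝ) :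
    ((NormedSpace.exp (r • A)).map Complex.ofReal).det ≠ 0 := by
  have h1 : NormedSpace.exp (r • A) * NormedSpace.exp (-(r • A)) = 1 := by
    rw [← Matrix.exp_add_of_commute _ _ ((Commute.refl (r • A)).neg_right)]
    simp [NormedSpace.exp_zero]
  have h2 : ((NormedSpace.exp (r • A)).map Complex.ofReal).det *
      ((NormedSpace.exp (-(r • A))).map Complex.ofReal).det = 1 := by
    rw [← Matrix.det_mul, ← mapC_mul, h1, mapC_one, Matrix.det_one]
  intro h
  rw [h, zero_mul] at h2
  exact zero_ne_one h2

end matrixkey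

lemma blocks_eq {n p : ℕ} (Am Em : Matrix (Fin n) (Fin n) ℂ) (Bm Gm : Matrix (Fin n) (Fin p) ℂ)
    (Km : Matrix (Fin p) (Fin n) ℂ) (Xm : Matrix (Fin p) (Fin p) ℂ) (s c : ℂ)
    (key : (s • 1 - Am) * Gm = Bm - c • (Em * Bm)) (comm : Am * Em = Em * Am) :
    Matrix.fromBlocks Em 0 (-(Km * Em)) 1 *
      Matrix.fromBlocks (s • 1 - Am) (-(c • Bm)) (-((Km * Am - Xm * Km) * Em))
        (s • 1 - (Km * Bm + Xm) - (Km * Am - Xm * Km) * Gm)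
    = Matrix.fromBlocks (s • 1 - Am - Bm * Km) (-Bm) 0 (s • 1 - Xm) *
        Matrix.fromBlocks Em Gm (-(Km * Em)) (1 - Km * Gm) := by
  have hAG : Am * Gm = s • Gm - (Bm - c • (Em * Bm)) := by
    rw [← key, Matrix.sub_mul, Matrix.smul_mul, Matrix.one_mul]; abel
  rw [Matrix.fromBlocks_multiply, Matrix.fromBlocks_multiply]
  refine Matrix.fromBlocks_inj.mpr ⟨?_, ?_, ?_, ?_⟩ <;>
    simp only [Matrix.sub_mul, Matrix.mul_sub, Matrix.add_mul, Matrix.mul_add,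
      Matrix.neg_mul, Matrix.mul_neg, Matrix.smul_mul, Matrix.mul_smul, Matrix.mul_one,
      Matrix.one_mul, Matrix.zero_mul, Matrix.mul_zero, Matrix.mul_assoc, hAG, comm,
      smul_sub, smul_add, smul_zero, smul_neg, neg_smul, neg_neg, add_zero, zero_add,
      sub_zero, zero_sub] <;>
    abel

lemma tfact {n p : ℕ} (Em : Matrix (Fin n) (Fin n) ℂ) (Gm : Matrix (Fin n) (Fin p) ℂ)
    (Km : Matrix (Fin p) (Fin n) ℂ) :
    (Matrix.fromBlocks Em Gm (-(Km * Em)) (1 - Km * Gm) : Matrix (Fin n ⊕ Fin p) _ ℂ)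
      = Matrix.fromBlocks 1 0 (-Km) 1 * Matrix.fromBlocks Em Gm 0 1 := by
  rw [Matrix.fromBlocks_multiply]
  refine Matrix.fromBlocks_inj.mpr ⟨?_, ?_, ?_, ?_⟩ <;>
    simp only [Matrix.one_mul, Matrix.zero_mul, Matrix.mul_zero, Matrix.neg_mul,
      Matrix.mul_one, add_zero, zero_add] <;> abel


/-- The characteristic matrix (from the Laplace transform) of the closed-loop
system `ẋ = Ax(t) + Bu(t−r)`,
`u̇ = (KB+X)u(t) + (KA−XK)(e^{Ar}x(t) + ∫_{-r}^0 e^{-Aτ}Bu(t+τ)dτ)`. -/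
noncomputable def charMatrix {n p : ℕ} (A : Matrix (Fin n) (Fin n) ℝ)
    (B : Matrix (Fin n) (Fin p) ℝ) (K : Matrix (Fin p) (Fin n) ℝ)
    (X : Matrix (Fin p) (Fin p) ℝ) (r : ℝ) (s : ℂ) :
    Matrix (Fin n ⊕ Fin p) (Fin n ⊕ Fin p) ℂ :=
  Matrix.fromBlocks
    (s • (1 : Matrix (Fin n) (Fin n) ℂ) - A.map Complex.ofReal)
    (-(Complex.exp (-(s * r)) • B.map Complex.ofReal))
    (-(((K * A - X * K) * NormedSpace.exp (r • A)).map Complex.ofReal))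
    (s • (1 : Matrix (Fin p) (Fin p) ℂ) - (K * B + X).map Complex.ofReal -
      ((K * A - X * K).map Complex.ofReal) *
        (Matrix.of fun i j => ∫ τ in (-r)..0,
          Complex.exp (s * τ) *
            ((NormedSpace.exp ((-τ) • A) * B) i j : ℂ)))

lemma det_factor {n p : ℕ} (A : Matrix (Fin n) (Fin n) ℝ) (B : Matrix (Fin n) (Fin p) ℝ)
    (K : Matrix (Fin p) (Fin n) ℝ) (X : Matrix (Fin p) (Fin p) ℝ) (r : ℝ) (s : ℂ) :
    (charMatrix A B K X r s).det =
      (s • (1 : Matrix (Fin n) (Fin n) ℂ) - (A + B * K).map Complex.ofReal).det *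
        (s • (1 : Matrix (Fin p) (Fin p) ℂ) - X.map Complex.ofReal).det := by
  classical
  have key : (s • (1 : Matrix (Fin n) (Fin n) ℂ) - A.map Complex.ofReal) *
      (Matrix.of fun i j => ∫ τ in (-r)..0,
        Complex.exp (s * τ) * ((NormedSpace.exp ((-τ) • A) * B) i j : ℂ))
      = B.map Complex.ofReal - Complex.exp (-(s * r)) •
          ((NormedSpace.exp (r • A)).map Complex.ofReal * B.map Complex.ofReal) := by
    rw [key_matrix A B r s, mapC_mul]
  have comm := exp_commute_map A r
  have hM : charMatrix A B K X r s = Matrix.fromBlocks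
      (s • 1 - A.map Complex.ofReal)
      (-(Complex.exp (-(s * r)) • B.map Complex.ofReal))
      (-((K.map Complex.ofReal * A.map Complex.ofReal -
          X.map Complex.ofReal * K.map Complex.ofReal) *
          (NormedSpace.exp (r • A)).map Complex.ofReal))
      (s • 1 - (K.map Complex.ofReal * B.map Complex.ofReal + X.map Complex.ofReal) -
        (K.map Complex.ofReal * A.map Complex.ofReal -
          X.map Complex.ofReal * K.map Complex.ofReal) *
          (Matrix.of fun i j => ∫ τ in (-r)..0,
            Complex.exp (s * τ) * ((NormedSpace.exp ((-τ) • A) * B) i j : ℂ))) := by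
    unfold charMatrix
    rw [mapC_mul (K * A - X * K), mapC_sub, mapC_mul K A, mapC_mul X K, mapC_add, mapC_mul K B]
  have hprod := blocks_eq (A.map Complex.ofReal)
    ((NormedSpace.exp (r • A)).map Complex.ofReal) (B.map Complex.ofReal)
    (Matrix.of fun i j => ∫ τ in (-r)..0,
      Complex.exp (s * τ) * ((NormedSpace.exp ((-τ) • A) * B) i j : ℂ))
    (K.map Complex.ofReal) (X.map Complex.ofReal) s (Complex.exp (-(s * r))) key comm
  rw [← hM] at hprod
  have hdet := congrArg Matrix.det hprod
  rw [tfact] at hdet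
  simp only [Matrix.det_mul, Matrix.det_fromBlocks_zero₁₂, Matrix.det_fromBlocks_zero₂₁,
    Matrix.det_one, mul_one, one_mul] at hdet
  have hsub : s • (1 : Matrix (Fin n) (Fin n) ℂ) - (A + B * K).map Complex.ofReal
      = s • 1 - A.map Complex.ofReal - B.map Complex.ofReal * K.map Complex.ofReal := by
    rw [mapC_add, mapC_mul, sub_sub]
  rw [hsub]
  exact mul_left_cancel₀ (expMap_det_ne_zero A r) (by rw [hdet]; ring)


/-- The characteristic function of the closed loop with the predictor-based
dynamical controller factors as `det(sI−A−BK)·det(sI−X)`; hence if `A+BK` and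
`X` are Hurwitz, every characteristic root has negative real part. -/
theorem closed_loop_spectrum_factorization
    {n p : ℕ} (A : Matrix (Fin n) (Fin n) ℝ) (B : Matrix (Fin n) (Fin p) ℝ)
    (K : Matrix (Fin p) (Fin n) ℝ) (X : Matrix (Fin p) (Fin p) ℝ)
    (r : ℝ) (hr : 0 < r)
    (hABK : ∀ s : ℂ,
      (s • (1 : Matrix (Fin n) (Fin n) ℂ) - (A + B * K).map Complex.ofReal).det = 0 →
        s.re < 0)
    (hX : ∀ s : ℂ,
      (s • (1 : Matrix (Fin p) (Fin p) ℂ) - X.map Complex.ofReal).det = 0 →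
        s.re < 0) :
    (∀ s : ℂ, (charMatrix A B K X r s).det =
        (s • (1 : Matrix (Fin n) (Fin n) ℂ) - (A + B * K).map Complex.ofReal).det *
          (s • (1 : Matrix (Fin p) (Fin p) ℂ) - X.map Complex.ofReal).det) ∧
    (∀ s : ℂ, (charMatrix A B K X r s).det = 0 → s.re < 0) := by
  refine ⟨fun s => det_factor A B K X r s, fun s hs => ?_⟩
  rw [det_factor A B K X r s, mul_eq_zero] at hs
  rcases hs with h | h
  · exact hABK s h
  · exact hX s h
end

section
/- Let A ∈ ℝ^{n×n}, B ∈ ℝ^{n×p}, r > 0, and K ∈ ℝ^{p×n}. If u : ℝ → ℝ^p and x : ℝ → ℝ^n are C¹ and satisfy ẋ(t) = Ax(t) + Bu(t−r) and the predictor relation u(t) = K(e^{Ar} x(t) + ∫_{-r}^0 e^{-Aτ} B u(t+τ) dτ) for all t, then for any X ∈ ℝ^{p×p}, u̇(t) = (KB + X)u(t) + (KA − XK)(e^{Ar} x(t) + ∫_{-r}^0 e^{-Aτ} B u(t+τ) dτ). -/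
open Matrix intervalIntegral

section Aux

/-- `mulVec` as a continuous linear map, bundled linearly in the matrix. -/
noncomputable def matCLM {m n : ℕ} : Matrix (Fin m) (Fin n) ℝ →L[ℝ] ((Fin n → ℝ) →L[ℝ] (Fin m → ℝ)) :=
  LinearMap.toContinuousLinearMap
  { toFun := fun M => LinearMap.toContinuousLinearMap M.mulVecLin
    map_add' := fun M N => by ext v i; simp [Matrix.add_mulVec]
    map_smul' := fun c M => by ext v i; simp [Matrix.smul_mulVec] }

@[simp] lemma matCLM_apply {m n : ℕ} (M : Matrix (Fin m) (Fin n) ℝ) (v : Fin n → ℝ) :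
    matCLM M v = M.mulVec v := rfl

lemma hasDerivAt_mulVec {m n : ℕ} (M : Matrix (Fin m) (Fin n) ℝ)
    {f : ℝ → Fin n → ℝ} {f' : Fin n → ℝ} {t : ℝ} (hf : HasDerivAt f f' t) :
    HasDerivAt (fun s => M.mulVec (f s)) (M.mulVec f') t := by
  simpa [Function.comp_def] using ((matCLM M).hasFDerivAt.comp_hasDerivAt t hf)

/-- `mulVec` as an algebra homomorphism on square matrices. -/
noncomputable def matAH {n : ℕ} : Matrix (Fin n) (Fin n) ℝ →ₐ[ℝ] ((Fin n → ℝ) →L[ℝ] (Fin n → ℝ)) where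
  toFun := fun M => matCLM M
  map_one' := by ext v i; simp
  map_mul' := fun M N => by ext v i; simp [Matrix.mulVec_mulVec]
  map_zero' := by ext v i; simp
  map_add' := fun M N => by ext v i; simp [Matrix.add_mulVec]
  commutes' := fun c => by
    ext v i
    simp [Algebra.algebraMap_eq_smul_one, Matrix.smul_mulVec]

@[simp] lemma matAH_apply {n : ℕ} (M : Matrix (Fin n) (Fin n) ℝ) (v : Fin n → ℝ) :
    matAH M v = M.mulVec v := rfl

lemma matAH_continuous {n : ℕ} : Continuous (matAH (n := n)) :=
  LinearMap.continuous_of_finiteDimensional (matAH (n := n)).toLinearMap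

lemma matAH_exp {n : ℕ} (M : Matrix (Fin n) (Fin n) ℝ) :
    matAH (NormedSpace.exp M) = NormedSpace.exp (matAH M) := by
  letI : SeminormedRing (Matrix (Fin n) (Fin n) ℝ) := Matrix.linftyOpSemiNormedRing
  letI : NormedRing (Matrix (Fin n) (Fin n) ℝ) := Matrix.linftyOpNormedRing
  letI : NormedAlgebra ℝ (Matrix (Fin n) (Fin n) ℝ) := Matrix.linftyOpNormedAlgebra
  letI : NormedAlgebra ℚ (Matrix (Fin n) (Fin n) ℝ) := .restrictScalars ℚ ℝ _
  letI : NormedAlgebra ℚ ((Fin n → ℝ) →L[ℝ] (Fin n → ℝ)) := .restrictScalars ℚ ℝ _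
  exact NormedSpace.map_exp matAH matAH_continuous M

lemma controller_algebra {n p : ℕ} (A : Matrix (Fin n) (Fin n) ℝ)
    (B : Matrix (Fin n) (Fin p) ℝ) (K : Matrix (Fin p) (Fin n) ℝ)
    (X : Matrix (Fin p) (Fin p) ℝ) (v : Fin n → ℝ) (w : Fin p → ℝ)
    (hw : w = K.mulVec v) :
    (K * B + X).mulVec w + (K * A - X * K).mulVec v
      = K.mulVec (A.mulVec v + B.mulVec w) := by
  subst hw
  rw [Matrix.add_mulVec, Matrix.sub_mulVec, Matrix.mulVec_add,
    ← Matrix.mulVec_mulVec, ← Matrix.mulVec_mulVec, ← Matrix.mulVec_mulVec]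
  abel

end Aux

set_option maxHeartbeats 1000000 in
/-- If `x` solves `ẋ = Ax + Bu(t−r)` and `u` is `C¹` satisfying the predictor
relation `u(t) = K(e^{Ar}x(t) + ∫_{-r}^0 e^{-Aτ}Bu(t+τ)dτ)`, then `u` obeys the
dynamical controller equation
`u̇ = (KB+X)u + (KA−XK)(e^{Ar}x + ∫_{-r}^0 e^{-Aτ}Bu(t+τ)dτ)` for any `X`. -/
theorem predictor_implies_dynamic_controller
    {n p : ℕ} (A : Matrix (Fin n) (Fin n) ℝ) (B : Matrix (Fin n) (Fin p) ℝ)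
    (r : ℝ) (hr : 0 < r) (K : Matrix (Fin p) (Fin n) ℝ)
    (x : ℝ → Fin n → ℝ) (u u' : ℝ → Fin p → ℝ)
    (hu' : Continuous u')
    (hu : ∀ t : ℝ, HasDerivAt u (u' t) t)
    (hx : ∀ t : ℝ, HasDerivAt x (A.mulVec (x t) + B.mulVec (u (t - r))) t)
    (hpred : ∀ t : ℝ, u t = K.mulVec
      ((NormedSpace.exp (r • A)).mulVec (x t) +
        ∫ τ in (-r)..0, (NormedSpace.exp ((-τ) • A) * B).mulVec (u (t + τ))))
    (X : Matrix (Fin p) (Fin p) ℝ) :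
    ∀ t : ℝ, HasDerivAt u
      ((K * B + X).mulVec (u t) +
        (K * A - X * K).mulVec
          ((NormedSpace.exp (r • A)).mulVec (x t) +
            ∫ τ in (-r)..0,
              (NormedSpace.exp ((-τ) • A) * B).mulVec (u (t + τ)))) t := by
  intro t
  classical
  letI : NormedAlgebra ℚ ((Fin n → ℝ) →L[ℝ] (Fin n → ℝ)) := .restrictScalars ℚ ℝ _
  set a : (Fin n → ℝ) →L[ℝ] (Fin n → ℝ) := matAH A with ha
  set e : ℝ → ((Fin n → ℝ) →L[ℝ] (Fin n → ℝ)) := fun s => NormedSpace.exp (s • a) with he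
  have hmatexp : ∀ s : ℝ, matAH (NormedSpace.exp (s • A)) = e s := by
    intro s
    rw [matAH_exp, he]
    congr 1
    exact map_smul matAH.toLinearMap s A
  have hbridge : ∀ (s : ℝ) (v : Fin n → ℝ),
      (NormedSpace.exp (s • A)).mulVec v = e s v := by
    intro s v
    rw [show (NormedSpace.exp (s • A)).mulVec v = matAH (NormedSpace.exp (s • A)) v from rfl,
      hmatexp]
  have haapp : ∀ v : Fin n → ℝ, a v = A.mulVec v := fun v => rfl
  have hee : ∀ s₁ s₂ : ℝ, e s₁ * e s₂ = e (s₁ + s₂) := by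
    intro s₁ s₂
    rw [he]
    simp only
    rw [← NormedSpace.exp_add_of_commute (((Commute.refl a).smul_left s₁).smul_right s₂), add_smul]
  have he0 : e 0 = 1 := by rw [he]; simp [NormedSpace.exp_zero]
  have hucont : Continuous u := by
    rw [continuous_iff_continuousAt]; exact fun s => (hu s).continuousAt
  -- the kernel
  set h : ℝ → Fin n → ℝ := fun s => (NormedSpace.exp ((-s) • A) * B).mulVec (u s) with hh
  have hhe : ∀ s : ℝ, h s = e (-s) (B.mulVec (u s)) := by
    intro s
    rw [hh]
    simp only
    rw [← Matrix.mulVec_mulVec, hbridge]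
  have hhcont : Continuous h := by
    have h1 : Continuous fun s : ℝ => e (-s) := by
      rw [he]
      exact NormedSpace.exp_continuous.comp ((continuous_neg).smul continuous_const)
    have h2 : Continuous fun s : ℝ => B.mulVec (u s) := (matCLM B).continuous.comp hucont
    have := h1.clm_apply h2
    rw [show (fun s => e (-s) (B.mulVec (u s))) = h from (funext fun s => (hhe s).symm)] at this
    exact this
  have hint : ∀ a' b' : ℝ, IntervalIntegrable h MeasureTheory.volume a' b' :=
    fun a' b' => hhcont.intervalIntegrable a' b'
  set F : ℝ → Fin n → ℝ := fun τ => ∫ s in (0:ℝ)..τ, h s with hF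
  -- the integral term equals e τ (F τ - F (τ - r))
  have key : ∀ τ : ℝ,
      (∫ σ in (-r)..0, (NormedSpace.exp ((-σ) • A) * B).mulVec (u (τ + σ)))
        = e τ (F τ - F (τ - r)) := by
    intro τ
    have step1 : ∀ σ : ℝ,
        (NormedSpace.exp ((-σ) • A) * B).mulVec (u (τ + σ)) = e τ (h (σ + τ)) := by
      intro σ
      have hc : Commute (τ • A) ((-(σ + τ)) • A) :=
        ((Commute.refl A).smul_left τ).smul_right (-(σ + τ))
      have hsplit : NormedSpace.exp ((-σ) • A)
          = NormedSpace.exp (τ • A) * NormedSpace.exp ((-(σ + τ)) • A) := by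
        have h1 := Matrix.exp_add_of_commute (τ • A) ((-(σ + τ)) • A) hc
        rw [← add_smul] at h1
        have h2 : τ + -(σ + τ) = -σ := by ring
        rw [h2] at h1
        exact h1
      rw [add_comm τ σ, hsplit, Matrix.mul_assoc, ← Matrix.mulVec_mulVec, hbridge, hh]
    calc (∫ σ in (-r)..0, (NormedSpace.exp ((-σ) • A) * B).mulVec (u (τ + σ)))
        = ∫ σ in (-r)..0, e τ (h (σ + τ)) := by
          apply intervalIntegral.integral_congr
          intro σ _
          exact step1 σ
      _ = ∫ s in (-r + τ)..(0 + τ), e τ (h s) :=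
          intervalIntegral.integral_comp_add_right (fun s => e τ (h s)) τ
      _ = ∫ s in (τ - r)..τ, e τ (h s) := by rw [zero_add, add_comm, ← sub_eq_add_neg]
      _ = e τ (∫ s in (τ - r)..τ, h s) := (e τ).intervalIntegral_comp_comm (hint _ _)
      _ = e τ (F τ - F (τ - r)) := by
          rw [hF]
          simp only
          rw [intervalIntegral.integral_interval_sub_left (hint 0 τ) (hint 0 (τ - r))]
  -- the predictor state
  set P : ℝ → Fin n → ℝ := fun τ =>
    (NormedSpace.exp (r • A)).mulVec (x τ) + e τ (F τ - F (τ - r)) with hP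
  -- derivative of the CLM-valued exponential
  have heD : HasDerivAt e (e t * a) t := by
    rw [he]
    exact hasDerivAt_exp_smul_const a t
  -- derivative of τ ↦ F τ - F (τ - r)
  have hFD : HasDerivAt F (h t) t := (hhcont.integral_hasStrictDerivAt 0 t).hasDerivAt
  have hFrD : HasDerivAt (fun τ => F (τ - r)) (h (t - r)) t := by
    have h1 : HasDerivAt F (h (t - r)) (t - r) :=
      (hhcont.integral_hasStrictDerivAt 0 (t - r)).hasDerivAt
    have h2 : HasDerivAt (fun τ : ℝ => τ - r) 1 t := (hasDerivAt_id t).sub_const r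
    simpa [Function.comp_def] using h1.scomp t h2
  have hWD : HasDerivAt (fun τ => F τ - F (τ - r)) (h t - h (t - r)) t := hFD.sub hFrD
  -- derivative of the integral term
  have hGD : HasDerivAt (fun τ => e τ (F τ - F (τ - r)))
      ((e t * a) (F t - F (t - r)) + e t (h t - h (t - r))) t := heD.clm_apply hWD
  have hcomm : e t * a = a * e t := by
    rw [he]
    exact (((Commute.refl a).smul_right t).exp_right).symm.eq
  have e2 : e t (h t) = B.mulVec (u t) := by
    rw [hhe, ← ContinuousLinearMap.mul_apply, hee, add_neg_cancel, he0,
      ContinuousLinearMap.one_apply]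
  have e3 : e t (h (t - r)) = (NormedSpace.exp (r • A) * B).mulVec (u (t - r)) := by
    rw [hhe, ← ContinuousLinearMap.mul_apply, hee,
      show t + -(t - r) = r by ring, ← hbridge, Matrix.mulVec_mulVec]
  have esub : e t (h t - h (t - r))
      = B.mulVec (u t) - (NormedSpace.exp (r • A) * B).mulVec (u (t - r)) := by
    rw [map_sub, e2, e3]
  have hGD' : HasDerivAt (fun τ => e τ (F τ - F (τ - r)))
      (A.mulVec (e t (F t - F (t - r))) + B.mulVec (u t)
        - (NormedSpace.exp (r • A) * B).mulVec (u (t - r))) t := by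
    have heq : (e t * a) (F t - F (t - r)) + e t (h t - h (t - r))
        = A.mulVec (e t (F t - F (t - r))) + B.mulVec (u t)
          - (NormedSpace.exp (r • A) * B).mulVec (u (t - r)) := by
      rw [hcomm, ContinuousLinearMap.mul_apply, haapp, esub, add_sub_assoc]
    exact heq ▸ hGD
  -- derivative of P
  have hPD : HasDerivAt P (A.mulVec (P t) + B.mulVec (u t)) t := by
    have h1 : HasDerivAt (fun τ => (NormedSpace.exp (r • A)).mulVec (x τ))
        ((NormedSpace.exp (r • A)).mulVec (A.mulVec (x t) + B.mulVec (u (t - r)))) t :=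
      hasDerivAt_mulVec _ (hx t)
    have h2 := h1.add hGD'
    have hEA : NormedSpace.exp (r • A) * A = A * NormedSpace.exp (r • A) :=
      (((Commute.refl A).smul_right r).exp_right).symm.eq
    have heq : (NormedSpace.exp (r • A)).mulVec (A.mulVec (x t) + B.mulVec (u (t - r)))
        + (A.mulVec (e t (F t - F (t - r))) + B.mulVec (u t)
          - (NormedSpace.exp (r • A) * B).mulVec (u (t - r)))
        = A.mulVec (P t) + B.mulVec (u t) := by
      rw [hP]
      simp only
      rw [Matrix.mulVec_add, Matrix.mulVec_add, Matrix.mulVec_mulVec,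
        Matrix.mulVec_mulVec, hEA, ← Matrix.mulVec_mulVec, ← Matrix.mulVec_mulVec]
      abel
    exact heq ▸ h2
  -- u = K ∘ P
  have huP : u = fun τ => K.mulVec (P τ) := by
    funext τ
    rw [hpred τ, hP]
    simp only
    rw [key τ]
  have huD : HasDerivAt u (K.mulVec (A.mulVec (P t) + B.mulVec (u t))) t := by
    have hKP := hasDerivAt_mulVec K hPD
    rwa [← huP] at hKP
  -- identify the claimed derivative
  have htarget :
      (K * B + X).mulVec (u t) +
        (K * A - X * K).mulVec
          ((NormedSpace.exp (r • A)).mulVec (x t) +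
            ∫ τ in (-r)..0,
              (NormedSpace.exp ((-τ) • A) * B).mulVec (u (t + τ)))
        = K.mulVec (A.mulVec (P t) + B.mulVec (u t)) := by
    have hPt : ((NormedSpace.exp (r • A)).mulVec (x t) +
        ∫ τ in (-r)..0, (NormedSpace.exp ((-τ) • A) * B).mulVec (u (t + τ))) = P t := by
      rw [key t, hP]
    have hut : u t = K.mulVec (P t) := by rw [huP]
    rw [hPt]
    exact controller_algebra A B K X (P t) (u t) hut
  rw [htarget]
  exact huD
end

section
/- Let A ∈ ℝ^{n×n}, B ∈ ℝ^{n×p}, r > 0. Define p(t) = e^{Ar} x(t) + ∫_{-r}^0 e^{-Aτ} B u(t+τ) dτ where x solves ẋ(t) = Ax(t) + Bu(t−r) for a continuous u. Then ṗ(t) = A p(t) + B u(t), i.e., the predictor state p satisfies the delay-free dynamics driven by the undelayed input. -/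
open Matrix intervalIntegral

section Aux

open NormedSpace

attribute [local instance] Matrix.linftyOpNormedAddCommGroup Matrix.linftyOpNormedSpace
  Matrix.linftyOpSemiNormedRing Matrix.linftyOpNormedRing Matrix.linftyOpNormedAlgebra

variable {a b : ℕ}

/-- entry evaluation as a continuous linear map -/
noncomputable def entryCLM (i : Fin a) (j : Fin b) :
    Matrix (Fin a) (Fin b) ℝ →L[ℝ] ℝ :=
  LinearMap.toContinuousLinearMap
    { toFun := fun M => M i j
      map_add' := fun _ _ => rfl
      map_smul' := fun _ _ => rfl }

lemma hasDerivAt_entry {M : ℝ → Matrix (Fin a) (Fin b) ℝ} {M' : Matrix (Fin a) (Fin b) ℝ}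
    {t : ℝ} (hM : HasDerivAt M M' t) (i : Fin a) (j : Fin b) :
    HasDerivAt (fun s => M s i j) (M' i j) t :=
  (entryCLM i j).hasFDerivAt.comp_hasDerivAt t hM

lemma hasDerivAt_mulVec_s14 {M : ℝ → Matrix (Fin a) (Fin b) ℝ} {v : ℝ → Fin b → ℝ}
    {M' : Matrix (Fin a) (Fin b) ℝ} {v' : Fin b → ℝ} {t : ℝ}
    (hM : HasDerivAt M M' t) (hv : HasDerivAt v v' t) :
    HasDerivAt (fun s => (M s).mulVec (v s)) (M'.mulVec (v t) + (M t).mulVec v') t := by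
  rw [hasDerivAt_pi]
  intro i
  have h : HasDerivAt (fun s => ∑ j, M s i j * v s j)
      (∑ j, (M' i j * v t j + M t i j * v' j)) t :=
    HasDerivAt.fun_sum fun j _ => (hasDerivAt_entry hM i j).mul ((hasDerivAt_pi.mp hv) j)
  have e1 : (fun s => (M s *ᵥ v s) i) = fun s => ∑ j, M s i j * v s j := by
    funext s; simp [Matrix.mulVec, dotProduct]
  have e2 : (M' *ᵥ v t + M t *ᵥ v') i = ∑ j, (M' i j * v t j + M t i j * v' j) := by
    simp [Matrix.mulVec, dotProduct, Finset.sum_add_distrib]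
  rw [e1, e2]
  exact h

lemma continuous_mulVecFn {M : ℝ → Matrix (Fin a) (Fin b) ℝ} {v : ℝ → Fin b → ℝ}
    (hM : Continuous M) (hv : Continuous v) :
    Continuous fun s => (M s).mulVec (v s) := by
  refine continuous_pi fun i => ?_
  show Continuous fun s => ∑ j, M s i j * v s j
  exact continuous_finset_sum _ fun j _ =>
    ((entryCLM i j).continuous.comp hM).mul ((continuous_apply j).comp hv)

noncomputable def mvCLM (M : Matrix (Fin a) (Fin b) ℝ) : (Fin b → ℝ) →L[ℝ] (Fin a → ℝ) :=
  LinearMap.toContinuousLinearMap M.mulVecLin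

lemma mvCLM_apply (M : Matrix (Fin a) (Fin b) ℝ) (v : Fin b → ℝ) :
    mvCLM M v = M.mulVec v := rfl

theorem predictor_state_delay_free_aux
    {n p : ℕ} (A : Matrix (Fin n) (Fin n) ℝ) (B : Matrix (Fin n) (Fin p) ℝ)
    (r : ℝ) (hr : 0 < r)
    (x : ℝ → Fin n → ℝ) (u : ℝ → Fin p → ℝ) (hu : Continuous u)
    (hx : ∀ t : ℝ, HasDerivAt x (A.mulVec (x t) + B.mulVec (u (t - r))) t) :
    ∀ t : ℝ, HasDerivAt
      (fun s : ℝ => (NormedSpace.exp (r • A)).mulVec (x s) +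
        ∫ τ in (-r)..0, (NormedSpace.exp ((-τ) • A) * B).mulVec (u (s + τ)))
      (A.mulVec ((NormedSpace.exp (r • A)).mulVec (x t) +
          ∫ τ in (-r)..0,
            (NormedSpace.exp ((-τ) • A) * B).mulVec (u (t + τ))) +
        B.mulVec (u t)) t := by
  intro t
  -- basic exponential facts
  have hcomm : ∀ c d : ℝ, Commute (c • A) (d • A) := fun c d =>
    ((Commute.refl A).smul_left c).smul_right d
  have hmul : ∀ c d : ℝ, exp ((c + d) • A) = exp (c • A) * exp (d • A) := fun c d => by
    rw [add_smul]; exact exp_add_of_commute (hcomm c d)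
  have hexp_cont : Continuous fun σ : ℝ => exp ((-σ) • A) :=
    exp_continuous.comp (continuous_neg.smul continuous_const)
  -- the shifted-input integrand
  set g : ℝ → Fin n → ℝ := fun σ => (exp ((-σ) • A)).mulVec (B.mulVec (u σ)) with hg_def
  have hg : Continuous g := continuous_mulVecFn hexp_cont (continuous_mulVecFn continuous_const hu)
  have hgI : ∀ c d : ℝ, IntervalIntegrable g MeasureTheory.volume c d := fun c d =>
    hg.intervalIntegrable c d
  -- the "reduced" state q
  set q : ℝ → Fin n → ℝ := fun s => (exp ((r - s) • A)).mulVec (x s) +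
      ((∫ σ in (0:ℝ)..s, g σ) - ∫ σ in (0:ℝ)..(s - r), g σ) with hq_def
  -- the predictor equals exp(sA) ⬝ q s
  have key : ∀ s : ℝ, ((exp (r • A)).mulVec (x s) +
      ∫ τ in (-r)..0, (exp ((-τ) • A) * B).mulVec (u (s + τ)))
      = (exp (s • A)).mulVec (q s) := by
    intro s
    have hint : (∫ τ in (-r)..0, (exp ((-τ) • A) * B).mulVec (u (s + τ)))
        = ∫ σ in (s - r)..s, (exp (s • A)).mulVec (g σ) := by
      have h1 : (fun τ => (exp ((-τ) • A) * B).mulVec (u (s + τ)))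
          = fun τ => (exp (s • A)).mulVec (g (τ + s)) := by
        funext τ
        rw [hg_def]
        simp only [Matrix.mulVec_mulVec, ← Matrix.mul_assoc, ← hmul s (-(τ + s)),
          show s + -(τ + s) = -τ by ring, show s + τ = τ + s by ring]
      rw [h1, intervalIntegral.integral_comp_add_right (fun σ => (exp (s • A)).mulVec (g σ)) s]
      norm_num [sub_eq_neg_add]
    rw [hint]
    have h2 : (∫ σ in (s - r)..s, (exp (s • A)).mulVec (g σ))
        = (exp (s • A)).mulVec (∫ σ in (s - r)..s, g σ) := by
      simpa only [mvCLM_apply] using (mvCLM (exp (s • A))).intervalIntegral_comp_comm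
        (hgI (s - r) s)
    have h3 : (∫ σ in (s - r)..s, g σ)
        = (∫ σ in (0:ℝ)..s, g σ) - ∫ σ in (0:ℝ)..(s - r), g σ :=
      (intervalIntegral.integral_interval_sub_left (hgI 0 s) (hgI 0 (s - r))).symm
    have h4 : (exp (r • A)).mulVec (x s)
        = (exp (s • A)).mulVec ((exp ((r - s) • A)).mulVec (x s)) := by
      rw [Matrix.mulVec_mulVec, ← hmul s (r - s), show s + (r - s) = r by ring]
    rw [h2, h3, h4, hq_def, ← Matrix.mulVec_add]
  -- derivative of the matrix factor exp((r-s)A)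
  have hE1 : HasDerivAt (fun s : ℝ => exp ((r - s) • A)) (-(A * exp ((r - t) • A))) t := by
    have h0 : HasDerivAt (fun c : ℝ => exp (c • A)) (A * exp ((r - t) • A)) (r - t) :=
      hasDerivAt_exp_smul_const' A (r - t)
    have hi : HasDerivAt (fun s : ℝ => r - s) (-1) t := (hasDerivAt_id t).const_sub r
    have h5 := h0.scomp t hi
    simp only [Function.comp_def, neg_one_smul] at h5
    exact h5
  -- FTC pieces
  have hF1 : HasDerivAt (fun s : ℝ => ∫ σ in (0:ℝ)..s, g σ) (g t) t :=
    intervalIntegral.integral_hasDerivAt_right (hgI 0 t)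
      (hg.stronglyMeasurableAtFilter _ _) hg.continuousAt
  have hF2 : HasDerivAt (fun s : ℝ => ∫ σ in (0:ℝ)..(s - r), g σ) (g (t - r)) t := by
    have h0 : HasDerivAt (fun y : ℝ => ∫ σ in (0:ℝ)..y, g σ) (g (t - r)) (t - r) :=
      intervalIntegral.integral_hasDerivAt_right (hgI 0 (t - r))
        (hg.stronglyMeasurableAtFilter _ _) hg.continuousAt
    have hi : HasDerivAt (fun s : ℝ => s - r) 1 t := (hasDerivAt_id t).sub_const r
    simpa [Function.comp_def] using h0.scomp t hi
  -- derivative of q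
  have hqd : HasDerivAt q ((-(A * exp ((r - t) • A))).mulVec (x t) +
      (exp ((r - t) • A)).mulVec (A.mulVec (x t) + B.mulVec (u (t - r))) +
      (g t - g (t - r))) t := by
    rw [hq_def]
    exact (hasDerivAt_mulVec_s14 hE1 (hx t)).add (hF1.sub hF2)
  have hgt : (-(A * exp ((r - t) • A))).mulVec (x t) +
      (exp ((r - t) • A)).mulVec (A.mulVec (x t) + B.mulVec (u (t - r))) +
      (g t - g (t - r)) = g t := by
    have hAE : exp ((r - t) • A) * A = A * exp ((r - t) • A) :=
      ((((Commute.refl A).smul_right (r - t)).exp_right).eq).symm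
    have hg_tr : g (t - r) = (exp ((r - t) • A)).mulVec (B.mulVec (u (t - r))) := by
      rw [hg_def]; simp only [neg_sub]
    rw [hg_tr, Matrix.neg_mulVec, Matrix.mulVec_add, Matrix.mulVec_mulVec, hAE,
      ← Matrix.mulVec_mulVec]
    abel
  have hqg : HasDerivAt q (g t) t := hgt ▸ hqd
  have hEt : HasDerivAt (fun s : ℝ => exp (s • A)) (A * exp (t • A)) t :=
    hasDerivAt_exp_smul_const' A t
  have hp : HasDerivAt (fun s : ℝ => (exp (s • A)).mulVec (q s))
      ((A * exp (t • A)).mulVec (q t) + (exp (t • A)).mulVec (g t)) t :=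
    hasDerivAt_mulVec_s14 hEt hqg
  have hval : (A * exp (t • A)).mulVec (q t) + (exp (t • A)).mulVec (g t)
      = A.mulVec ((exp (t • A)).mulVec (q t)) + B.mulVec (u t) := by
    congr 1
    · rw [← Matrix.mulVec_mulVec]
    · rw [hg_def]
      show (exp (t • A)).mulVec ((exp ((-t) • A)).mulVec (B.mulVec (u t))) = B.mulVec (u t)
      rw [Matrix.mulVec_mulVec, ← hmul t (-t)]
      simp
  rw [hval] at hp
  have hfinal := hp.congr_of_eventuallyEq (Filter.Eventually.of_forall fun s => (key s))
  rw [key t]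
  exact hfinal

end Aux

/-- Artstein's delay reduction: the predictor state
`p(t) = e^{Ar}x(t) + ∫_{-r}^0 e^{-Aτ}Bu(t+τ)dτ` satisfies the delay-free
dynamics `ṗ = Ap + Bu(t)` whenever `ẋ = Ax + Bu(t−r)` and `u` is continuous. -/
theorem predictor_state_delay_free
    {n p : ℕ} (A : Matrix (Fin n) (Fin n) ℝ) (B : Matrix (Fin n) (Fin p) ℝ)
    (r : ℝ) (hr : 0 < r)
    (x : ℝ → Fin n → ℝ) (u : ℝ → Fin p → ℝ) (hu : Continuous u)
    (hx : ∀ t : ℝ, HasDerivAt x (A.mulVec (x t) + B.mulVec (u (t - r))) t) :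
    ∀ t : ℝ, HasDerivAt
      (fun s : ℝ => (NormedSpace.exp (r • A)).mulVec (x s) +
        ∫ τ in (-r)..0, (NormedSpace.exp ((-τ) • A) * B).mulVec (u (s + τ)))
      (A.mulVec ((NormedSpace.exp (r • A)).mulVec (x t) +
          ∫ τ in (-r)..0,
            (NormedSpace.exp ((-τ) • A) * B).mulVec (u (t + τ))) +
        B.mulVec (u t)) t :=
  predictor_state_delay_free_aux A B r hr x u hu hx
end
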